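/- arXiv:2305.18204 — 2 statements merged into one kernel-verified Lean document; each statement's English description precedes it below -/
import Mathlib

section
/- Let n, d, m, m' ≥ 1 and σ_x, σ_y > 0. Let the joint KDM over ℝⁿ × ℝᵈ have components (x'⁽ⁱ⁾, y'⁽ⁱ⁾), i = 1, …, m', and nonnegative weights p'₁, …, p'_{m'} summing to 1 with at least one p'ⱼ > 0, and joint density f̂_{x'y'}(x, y) = (σ_x√π)^{-n}(σ_y√π)^{-d} Σᵢ p'ᵢ exp(−‖x − x'⁽ⁱ⁾‖²/σ_x²) exp(−‖y − y'⁽ⁱ⁾‖²/σ_y²). Let the input KDM have components x⁽¹⁾, …, x⁽ᵐ⁾ ∈ ℝⁿ and nonnegative weights p₁, …, p_m summing to 1. Define p''ᵢ = Σ_{ℓ=1}^{m} p_ℓ p'ᵢ exp(−‖x⁽ℓ⁾ − x'⁽ⁱ⁾‖²/σ_x²) / (Σ_{j=1}^{m'} p'ⱼ exp(−‖x⁽ℓ⁾ − x'⁽ʲ⁾‖²/σ_x²)) and the output density f̂_y(y) = (σ_y√π)^{-d} Σᵢ₌₁^{m'} p''ᵢ exp(−‖y − y'⁽ⁱ⁾‖²/σ_y²).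 Then for every y ∈ ℝᵈ, f̂_y(y) = Σ_{ℓ=1}^{m} p_ℓ · f̂_{x'y'}(x⁽ℓ⁾, y) / ∫_{ℝᵈ} f̂_{x'y'}(x⁽ℓ⁾, y') dy'; that is, the inferred output KDM density is the mixture, with weights p_ℓ, of the conditional densities of the joint KDM given x⁽ℓ⁾. -/
open MeasureTheory
open scoped BigOperators Real

lemma kdm_gauss_integrable (d : ℕ) (b : ℝ) (hb : 0 < b) (w : EuclideanSpace ℝ (Fin d)) :
    Integrable (fun v : EuclideanSpace ℝ (Fin d) => Real.exp (-b * ‖v - w‖ ^ 2)) := by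
  have h := GaussianFourier.integrable_cexp_neg_mul_sq_norm_add
    (V := EuclideanSpace ℝ (Fin d)) (b := (b : ℂ)) (by simpa using hb) 0 0
  have h2 : Integrable (fun v : EuclideanSpace ℝ (Fin d) => Real.exp (-b * ‖v‖ ^ 2)) := by
    have := h.re
    convert this using 2 with v
    simp only [zero_mul, add_zero, RCLike.re_to_complex]
    rw [show (-(b : ℂ) * (‖v‖ : ℂ) ^ 2) = ((-b * ‖v‖ ^ 2 : ℝ) : ℂ) by push_cast; ring,
      ← Complex.ofReal_exp, Complex.ofReal_re]
  exact h2.comp_sub_right w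

lemma kdm_gauss_integrable' (d : ℕ) (σ : ℝ) (hσ : 0 < σ) (w : EuclideanSpace ℝ (Fin d)) :
    Integrable (fun v : EuclideanSpace ℝ (Fin d) => Real.exp (-‖v - w‖ ^ 2 / σ ^ 2)) := by
  have hb : 0 < 1 / σ ^ 2 := by positivity
  have := kdm_gauss_integrable d (1 / σ ^ 2) hb w
  convert this using 2 with v
  congr 1
  field_simp

lemma kdm_gauss_integral (d : ℕ) (σ : ℝ) (hσ : 0 < σ) (w : EuclideanSpace ℝ (Fin d)) :
    ∫ v : EuclideanSpace ℝ (Fin d), Real.exp (-‖v - w‖ ^ 2 / σ ^ 2)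
      = (σ * Real.sqrt π) ^ d := by
  have hb : 0 < 1 / σ ^ 2 := by positivity
  have h1 : ∀ v : EuclideanSpace ℝ (Fin d),
      Real.exp (-‖v - w‖ ^ 2 / σ ^ 2) = Real.exp (-(1 / σ ^ 2) * ‖v - w‖ ^ 2) := by
    intro v; congr 1; ring
  simp_rw [h1]
  rw [integral_sub_right_eq_self (μ := volume)
    (fun v : EuclideanSpace ℝ (Fin d) => Real.exp (-(1 / σ ^ 2) * ‖v‖ ^ 2)) w]
  rw [GaussianFourier.integral_rexp_neg_mul_sq_norm hb]
  have hfr : Module.finrank ℝ (EuclideanSpace ℝ (Fin d)) = d := by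
    simp [finrank_euclideanSpace]
  rw [hfr]
  have hππ : π / (1 / σ ^ 2) = (σ * Real.sqrt π) ^ 2 := by
    rw [mul_pow, Real.sq_sqrt Real.pi_pos.le]
    field_simp
  rw [hππ]
  have hσπ : (0 : ℝ) ≤ σ * Real.sqrt π := by positivity
  rw [← Real.rpow_natCast (σ * Real.sqrt π) 2, ← Real.rpow_mul hσπ]
  push_cast
  rw [show (2 : ℝ) * ((d : ℝ) / 2) = (d : ℝ) by ring, Real.rpow_natCast]

/-- For a joint Gaussian-kernel KDM and an input KDM, the output
density produced by the KDM inference rule equals the mixture, with the input weights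
`p_ℓ`, of the conditional densities of the joint KDM given each input component
`x⁽ℓ⁾`. -/
theorem kdm_inference_density_eq_mixture_of_conditionals
    (n d m m' : ℕ) (hn : 1 ≤ n) (hd : 1 ≤ d) (hm : 1 ≤ m) (hm' : 1 ≤ m')
    (σx σy : ℝ) (hσx : 0 < σx) (hσy : 0 < σy)
    (x' : Fin m' → EuclideanSpace ℝ (Fin n)) (y' : Fin m' → EuclideanSpace ℝ (Fin d))
    (p' : Fin m' → ℝ) (hp' : ∀ i, 0 ≤ p' i) (hp'1 : ∑ i, p' i = 1)
    (hpos : ∃ j, 0 < p' j)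
    (fxy : EuclideanSpace ℝ (Fin n) → EuclideanSpace ℝ (Fin d) → ℝ)
    (hfxy : ∀ u v, fxy u v =
      (σx * Real.sqrt π) ^ (-(n : ℤ)) * (σy * Real.sqrt π) ^ (-(d : ℤ)) *
        ∑ i, p' i *
          (Real.exp (-‖u - x' i‖ ^ 2 / σx ^ 2) * Real.exp (-‖v - y' i‖ ^ 2 / σy ^ 2)))
    (x : Fin m → EuclideanSpace ℝ (Fin n))
    (p : Fin m → ℝ) (hp : ∀ ℓ, 0 ≤ p ℓ) (hp1 : ∑ ℓ, p ℓ = 1)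
    (p'' : Fin m' → ℝ)
    (hp'' : ∀ i, p'' i =
      ∑ ℓ, p ℓ * p' i * Real.exp (-‖x ℓ - x' i‖ ^ 2 / σx ^ 2) /
        (∑ j, p' j * Real.exp (-‖x ℓ - x' j‖ ^ 2 / σx ^ 2)))
    (fy : EuclideanSpace ℝ (Fin d) → ℝ)
    (hfy : ∀ v, fy v =
      (σy * Real.sqrt π) ^ (-(d : ℤ)) * ∑ i, p'' i * Real.exp (-‖v - y' i‖ ^ 2 / σy ^ 2)) :
    ∀ v, fy v = ∑ ℓ, p ℓ * (fxy (x ℓ) v / ∫ v', fxy (x ℓ) v') := by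
  intro v
  set Cx : ℝ := (σx * Real.sqrt π) ^ (-(n : ℤ)) with hCx
  set Cy : ℝ := (σy * Real.sqrt π) ^ (-(d : ℤ)) with hCy
  have hσπx : (0 : ℝ) < σx * Real.sqrt π := by positivity
  have hσπy : (0 : ℝ) < σy * Real.sqrt π := by positivity
  have hCxpos : 0 < Cx := zpow_pos hσπx _
  have hCypos : 0 < Cy := zpow_pos hσπy _
  have hCxne : Cx ≠ 0 := hCxpos.ne'
  have hDpos : ∀ ℓ, 0 < ∑ j, p' j * Real.exp (-‖x ℓ - x' j‖ ^ 2 / σx ^ 2) := by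
    intro ℓ
    obtain ⟨j, hj⟩ := hpos
    refine Finset.sum_pos' (fun i _ => mul_nonneg (hp' i) (Real.exp_pos _).le)
      ⟨j, Finset.mem_univ j, mul_pos hj (Real.exp_pos _)⟩
  -- compute the integral of the joint density
  have hint : ∀ ℓ, (∫ v', fxy (x ℓ) v')
      = Cx * ∑ j, p' j * Real.exp (-‖x ℓ - x' j‖ ^ 2 / σx ^ 2) := by
    intro ℓ
    have heq : ∀ v' : EuclideanSpace ℝ (Fin d), fxy (x ℓ) v' =
        Cx * Cy * ∑ i, p' i * Real.exp (-‖x ℓ - x' i‖ ^ 2 / σx ^ 2) *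
          Real.exp (-‖v' - y' i‖ ^ 2 / σy ^ 2) := by
      intro v'
      rw [hfxy]
      congr 1
      exact Finset.sum_congr rfl fun i _ => by ring
    simp_rw [heq]
    rw [integral_const_mul]
    have hintgi : ∀ i : Fin m', Integrable
        (fun v' : EuclideanSpace ℝ (Fin d) =>
          p' i * Real.exp (-‖x ℓ - x' i‖ ^ 2 / σx ^ 2) *
            Real.exp (-‖v' - y' i‖ ^ 2 / σy ^ 2)) :=
      fun i => (kdm_gauss_integrable' d σy hσy (y' i)).const_mul _
    rw [integral_finset_sum _ (fun i _ => hintgi i)]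
    have hterm : ∀ i : Fin m',
        (∫ v' : EuclideanSpace ℝ (Fin d),
          p' i * Real.exp (-‖x ℓ - x' i‖ ^ 2 / σx ^ 2) *
            Real.exp (-‖v' - y' i‖ ^ 2 / σy ^ 2))
        = p' i * Real.exp (-‖x ℓ - x' i‖ ^ 2 / σx ^ 2) * (σy * Real.sqrt π) ^ d := by
      intro i
      rw [integral_const_mul, kdm_gauss_integral d σy hσy (y' i)]
    simp_rw [hterm]
    have hCy1 : Cy * (σy * Real.sqrt π) ^ d = 1 := by
      rw [hCy, ← zpow_natCast (σy * Real.sqrt π) d, ← zpow_add₀ (ne_of_gt hσπy)]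
      simp
    rw [← Finset.sum_mul]
    calc Cx * Cy * ((∑ i, p' i * Real.exp (-‖x ℓ - x' i‖ ^ 2 / σx ^ 2)) *
            (σy * Real.sqrt π) ^ d)
        = Cx * (∑ i, p' i * Real.exp (-‖x ℓ - x' i‖ ^ 2 / σx ^ 2)) *
            (Cy * (σy * Real.sqrt π) ^ d) := by ring
      _ = Cx * ∑ i, p' i * Real.exp (-‖x ℓ - x' i‖ ^ 2 / σx ^ 2) := by rw [hCy1, mul_one]
  -- the right-hand side, term by term
  have hrhs : ∀ ℓ, p ℓ * (fxy (x ℓ) v / ∫ v', fxy (x ℓ) v')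
      = Cy * ∑ i, p ℓ * p' i * Real.exp (-‖x ℓ - x' i‖ ^ 2 / σx ^ 2) *
          Real.exp (-‖v - y' i‖ ^ 2 / σy ^ 2) /
          (∑ j, p' j * Real.exp (-‖x ℓ - x' j‖ ^ 2 / σx ^ 2)) := by
    intro ℓ
    have hDne := (hDpos ℓ).ne'
    rw [hint ℓ, hfxy]
    have key : Cx * Cy * (∑ i, p' i * (Real.exp (-‖x ℓ - x' i‖ ^ 2 / σx ^ 2) *
          Real.exp (-‖v - y' i‖ ^ 2 / σy ^ 2))) /
          (Cx * ∑ j, p' j * Real.exp (-‖x ℓ - x' j‖ ^ 2 / σx ^ 2))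
        = Cy * (∑ i, p' i * (Real.exp (-‖x ℓ - x' i‖ ^ 2 / σx ^ 2) *
          Real.exp (-‖v - y' i‖ ^ 2 / σy ^ 2))) /
          (∑ j, p' j * Real.exp (-‖x ℓ - x' j‖ ^ 2 / σx ^ 2)) := by
      rw [mul_assoc, mul_div_mul_left _ _ hCxne]
    rw [key]
    simp only [Finset.mul_sum, Finset.sum_div]
    exact Finset.sum_congr rfl fun i _ => by ring
  rw [hfy]
  simp_rw [hrhs]
  rw [← Finset.mul_sum]
  congr 1
  rw [Finset.sum_comm]
  refine Finset.sum_congr rfl fun i _ => ?_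
  rw [hp'' i, Finset.sum_mul]
  refine Finset.sum_congr rfl fun ℓ _ => ?_
  ring
end

section
/- Let n, c, m, m' ≥ 1 and σ > 0. Let the joint KDM over ℝⁿ × ℝᶜ have components (x'⁽ⁱ⁾, y'⁽ⁱ⁾) with y'⁽ⁱ⁾ ≠ 0, i = 1, …, m', and nonnegative weights p'₁, …, p'_{m'} summing to 1 with at least one p'ⱼ > 0, and joint density f̂_{x'y'}(x, y) = (σ√π)^{-n} Σᵢ p'ᵢ exp(−‖x − x'⁽ⁱ⁾‖²/σ²) · (⟨y, y'⁽ⁱ⁾⟩/(‖y‖‖y'⁽ⁱ⁾‖))². Let the input KDM have components x⁽¹⁾, …, x⁽ᵐ⁾ ∈ ℝⁿ and nonnegative weights p₁, …, p_m summing to 1. Define p''ᵢ = Σ_{ℓ=1}^{m} p_ℓ p'ᵢ exp(−‖x⁽ℓ⁾ − x'⁽ⁱ⁾‖²/σ²) / (Σ_{j=1}^{m'} p'ⱼ exp(−‖x⁽ℓ⁾ − x'⁽ʲ⁾‖²/σ²)) and the output density f̂_y(y) = Σᵢ₌₁^{m'} p''ᵢ (⟨y, y'⁽ⁱ⁾⟩/(‖y‖‖y'⁽ⁱ⁾‖))²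 for nonzero y ∈ ℝᶜ. Then for every nonzero y ∈ ℝᶜ, f̂_y(y) = Σ_{ℓ=1}^{m} p_ℓ · f̂_{x'y'}(x⁽ℓ⁾, y) / ( Σ_{i=1}^{c} f̂_{x'y'}(x⁽ℓ⁾, e⁽ⁱ⁾) ), where e⁽¹⁾, …, e⁽ᶜ⁾ is the canonical basis of ℝᶜ; that is, the inferred output KDM density is the mixture, with weights p_ℓ, of the conditional categorical densities of the joint KDM given x⁽ℓ⁾. -/
open MeasureTheory
open scoped BigOperators Real RealInnerProductSpace

/-- For a joint (Gaussian ⊗ cosine)-kernel KDM and an input KDM, the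
inferred output density equals the mixture, with the input weights `p_ℓ`, of the
conditional categorical densities of the joint KDM given each input component `x⁽ℓ⁾`,
where the conditional normalizer is the sum of the joint density over the canonical
basis of the discrete variable. -/
theorem kdm_inference_density_eq_mixture_of_conditionals_discrete
    (n c m m' : ℕ) (hn : 1 ≤ n) (hc : 1 ≤ c) (hm : 1 ≤ m) (hm' : 1 ≤ m')
    (σ : ℝ) (hσ : 0 < σ)
    (x' : Fin m' → EuclideanSpace ℝ (Fin n)) (y' : Fin m' → EuclideanSpace ℝ (Fin c))
    (hy' : ∀ i, y' i ≠ 0)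
    (p' : Fin m' → ℝ) (hp' : ∀ i, 0 ≤ p' i) (hp'1 : ∑ i, p' i = 1)
    (hpos : ∃ j, 0 < p' j)
    (fxy : EuclideanSpace ℝ (Fin n) → EuclideanSpace ℝ (Fin c) → ℝ)
    (hfxy : ∀ u v, fxy u v =
      (σ * Real.sqrt π) ^ (-(n : ℤ)) *
        ∑ i, p' i * Real.exp (-‖u - x' i‖ ^ 2 / σ ^ 2) *
          (⟪v, y' i⟫ / (‖v‖ * ‖y' i‖)) ^ 2)
    (x : Fin m → EuclideanSpace ℝ (Fin n))
    (p : Fin m → ℝ) (hp : ∀ ℓ, 0 ≤ p ℓ) (hp1 : ∑ ℓ, p ℓ = 1)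
    (p'' : Fin m' → ℝ)
    (hp'' : ∀ i, p'' i =
      ∑ ℓ, p ℓ * p' i * Real.exp (-‖x ℓ - x' i‖ ^ 2 / σ ^ 2) /
        (∑ j, p' j * Real.exp (-‖x ℓ - x' j‖ ^ 2 / σ ^ 2)))
    (fy : EuclideanSpace ℝ (Fin c) → ℝ)
    (hfy : ∀ v, v ≠ 0 → fy v = ∑ i, p'' i * (⟪v, y' i⟫ / (‖v‖ * ‖y' i‖)) ^ 2) :
    ∀ v : EuclideanSpace ℝ (Fin c), v ≠ 0 →
      fy v = ∑ ℓ, p ℓ *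
        (fxy (x ℓ) v / ∑ i, fxy (x ℓ) (EuclideanSpace.single i (1 : ℝ))) := by
  intro v hv
  set C : ℝ := (σ * Real.sqrt π) ^ (-(n : ℤ)) with hCdef
  have hπ : (0 : ℝ) < Real.sqrt π := Real.sqrt_pos.2 Real.pi_pos
  have hC : 0 < C := by
    apply zpow_pos
    positivity
  set E : Fin m → Fin m' → ℝ := fun ℓ i => Real.exp (-‖x ℓ - x' i‖ ^ 2 / σ ^ 2) with hEdef
  have hD : ∀ ℓ, 0 < ∑ j, p' j * E ℓ j := by
    intro ℓ
    obtain ⟨j, hj⟩ := hpos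
    apply Finset.sum_pos'
    · intro i _
      exact mul_nonneg (hp' i) (Real.exp_pos _).le
    · exact ⟨j, Finset.mem_univ j, mul_pos hj (Real.exp_pos _)⟩
  -- sum of squared cosines over the canonical basis equals 1
  have hcos : ∀ j : Fin m',
      ∑ i : Fin c, (⟪(EuclideanSpace.single i (1 : ℝ) : EuclideanSpace ℝ (Fin c)), y' j⟫ /
        (‖(EuclideanSpace.single i (1 : ℝ) : EuclideanSpace ℝ (Fin c))‖ * ‖y' j‖)) ^ 2 = 1 := by
    intro j
    have hnorm : ∀ i : Fin c,
        ‖(EuclideanSpace.single i (1 : ℝ) : EuclideanSpace ℝ (Fin c))‖ = 1 := by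
      intro i; simp [EuclideanSpace.norm_single]
    have hinner : ∀ i : Fin c,
        ⟪(EuclideanSpace.single i (1 : ℝ) : EuclideanSpace ℝ (Fin c)), y' j⟫ = y' j i := by
      intro i; simp [EuclideanSpace.inner_single_left]
    have hny : ‖y' j‖ ≠ 0 := norm_ne_zero_iff.2 (hy' j)
    have hsum : ∑ i : Fin c, (y' j i) ^ 2 = ‖y' j‖ ^ 2 := by
      have := real_inner_self_eq_norm_sq (y' j)
      rw [← this, PiLp.inner_apply]
      simp [RCLike.inner_apply, sq]
    calc ∑ i : Fin c, (⟪(EuclideanSpace.single i (1 : ℝ) : EuclideanSpace ℝ (Fin c)), y' j⟫ /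
        (‖(EuclideanSpace.single i (1 : ℝ) : EuclideanSpace ℝ (Fin c))‖ * ‖y' j‖)) ^ 2
        = ∑ i : Fin c, (y' j i) ^ 2 / ‖y' j‖ ^ 2 := by
          refine Finset.sum_congr rfl fun i _ => ?_
          rw [hnorm i, hinner i, one_mul, div_pow]
      _ = 1 := by
          rw [← Finset.sum_div, hsum, div_self (pow_ne_zero _ hny)]
  -- the normalizer for each ℓ
  have hnormalizer : ∀ ℓ, ∑ i, fxy (x ℓ) (EuclideanSpace.single i (1 : ℝ)) =
      C * ∑ j, p' j * E ℓ j := by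
    intro ℓ
    have : ∑ i : Fin c, fxy (x ℓ) (EuclideanSpace.single i (1 : ℝ)) =
        C * ∑ i : Fin c, ∑ j, p' j * E ℓ j *
          (⟪(EuclideanSpace.single i (1 : ℝ) : EuclideanSpace ℝ (Fin c)), y' j⟫ /
            (‖(EuclideanSpace.single i (1 : ℝ) : EuclideanSpace ℝ (Fin c))‖ * ‖y' j‖)) ^ 2 := by
      rw [Finset.mul_sum]
      exact Finset.sum_congr rfl fun i _ => hfxy _ _
    rw [this, Finset.sum_comm]
    congr 1
    refine Finset.sum_congr rfl fun j _ => ?_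
    rw [← Finset.mul_sum, hcos j, mul_one]
  rw [hfy v hv]
  have key : ∀ ℓ, p ℓ * (fxy (x ℓ) v / ∑ i, fxy (x ℓ) (EuclideanSpace.single i (1 : ℝ))) =
      ∑ i, p ℓ * p' i * E ℓ i / (∑ j, p' j * E ℓ j) * (⟪v, y' i⟫ / (‖v‖ * ‖y' i‖)) ^ 2 := by
    intro ℓ
    rw [hnormalizer ℓ, hfxy]
    rw [mul_div_mul_left _ _ (ne_of_gt hC)]
    rw [Finset.sum_div, Finset.mul_sum]
    refine Finset.sum_congr rfl fun i _ => ?_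
    simp only [hEdef]
    ring
  calc ∑ i, p'' i * (⟪v, y' i⟫ / (‖v‖ * ‖y' i‖)) ^ 2
      = ∑ i, (∑ ℓ, p ℓ * p' i * E ℓ i / (∑ j, p' j * E ℓ j)) *
          (⟪v, y' i⟫ / (‖v‖ * ‖y' i‖)) ^ 2 := by
        refine Finset.sum_congr rfl fun i _ => ?_
        rw [hp'' i]
    _ = ∑ i, ∑ ℓ, p ℓ * p' i * E ℓ i / (∑ j, p' j * E ℓ j) *
          (⟪v, y' i⟫ / (‖v‖ * ‖y' i‖)) ^ 2 := by
        refine Finset.sum_congr rfl fun i _ => ?_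
        rw [Finset.sum_mul]
    _ = ∑ ℓ, ∑ i, p ℓ * p' i * E ℓ i / (∑ j, p' j * E ℓ j) *
          (⟪v, y' i⟫ / (‖v‖ * ‖y' i‖)) ^ 2 := Finset.sum_comm
    _ = ∑ ℓ, p ℓ * (fxy (x ℓ) v / ∑ i, fxy (x ℓ) (EuclideanSpace.single i (1 : ℝ))) := by
        exact Finset.sum_congr rfl fun ℓ _ => (key ℓ).symm
end
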